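/- Under the per-user reporting model below, the frequency estimator f̂ = ℓ·((n₁+n₂)/n − b)/(a−b) is unbiased: E[f̂] = f*, where f* = |U_k|/n is the true frequency of key k. -/

import Mathlib

open MeasureTheory ProbabilityTheory

/-- Unbiasedness of the PCKV frequency estimator. Each of `n` users reports
support for `1`, for `−1`, or for neither (encoded as an integer-valued random
variable `X u` with values `1`, `−1`, `0`): a user `u` possessing key `k`
(i.e. `u ∈ Uk`, with value `v u ∈ [−1,1]`) supports `1` with probability
`(1/ℓ)·a(1+(2p−1)v_u)/2 + (1−1/ℓ)·(b/2)` and `−1` with probability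
`(1/ℓ)·a(1−(2p−1)v_u)/2 + (1−1/ℓ)·(b/2)`, while a user not possessing key `k`
supports each of `1`, `−1` with probability `b/2`; the reports are independent
across users. Then the frequency estimator
`f̂ = ℓ·((n₁+n₂)/n − b)/(a−b)` satisfies `E[f̂] = f* = |Uk|/n`. -/
theorem pckv_frequency_unbiased
    (n ℓ : ℕ) (hn : 0 < n) (hℓ : 1 ≤ ℓ)
    (a b p : ℝ) (h0b : 0 < b) (hba : b < a) (ha1 : a < 1)
    (hp : 1/2 < p) (hp1 : p < 1)
    (Uk : Finset (Fin n)) (v : Fin n → ℝ)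
    (hv : ∀ u ∈ Uk, v u ∈ Set.Icc (-1 : ℝ) 1)
    (Ω : Type) [MeasurableSpace Ω] (μ : Measure Ω) [IsProbabilityMeasure μ]
    (X : Fin n → Ω → ℤ) (hX : ∀ u, Measurable (X u))
    (hind : iIndepFun X μ)
    (hXrange : ∀ u ω, X u ω = 1 ∨ X u ω = -1 ∨ X u ω = 0)
    (h1in : ∀ u ∈ Uk, μ {ω | X u ω = 1}
      = ENNReal.ofReal ((1 / (ℓ : ℝ)) * (a * (1 + (2*p - 1) * v u) / 2)
          + (1 - 1 / (ℓ : ℝ)) * (b / 2)))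
    (h2in : ∀ u ∈ Uk, μ {ω | X u ω = -1}
      = ENNReal.ofReal ((1 / (ℓ : ℝ)) * (a * (1 - (2*p - 1) * v u) / 2)
          + (1 - 1 / (ℓ : ℝ)) * (b / 2)))
    (h1out : ∀ u ∉ Uk, μ {ω | X u ω = 1} = ENNReal.ofReal (b / 2))
    (h2out : ∀ u ∉ Uk, μ {ω | X u ω = -1} = ENNReal.ofReal (b / 2)) :
    (∫ ω, (ℓ : ℝ) *
        ((((∑ u, (if X u ω = 1 then (1 : ℝ) else 0)) +
           (∑ u, (if X u ω = -1 then (1 : ℝ) else 0))) / (n : ℝ) - b)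
          / (a - b)) ∂μ)
      = (Uk.card : ℝ) / (n : ℝ) := by

  have hn' : (n:ℝ) ≠ 0 := Nat.cast_ne_zero.mpr hn.ne'
  have hℓ1 : (1:ℝ) ≤ (ℓ:ℝ) := by exact_mod_cast hℓ
  have hℓ0 : (0:ℝ) < (ℓ:ℝ) := lt_of_lt_of_le one_pos hℓ1
  have hab : a - b ≠ 0 := sub_ne_zero.mpr (ne_of_gt hba)
  -- measurability
  have hm : ∀ (u : Fin n) (c : ℤ), MeasurableSet {ω | X u ω = c} := by
    intro u c
    exact (hX u) (measurableSet_singleton c)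
  -- integrability and value of indicators
  have key : ∀ (u : Fin n) (c : ℤ),
      Integrable (fun ω => if X u ω = c then (1:ℝ) else 0) μ ∧
      ∫ ω, (if X u ω = c then (1:ℝ) else 0) ∂μ = (μ {ω | X u ω = c}).toReal := by
    intro u c
    have he : (fun ω => if X u ω = c then (1:ℝ) else 0)
        = Set.indicator {ω | X u ω = c} 1 := by
      funext ω; simp [Set.indicator_apply]
    constructor
    · rw [he]; exact (integrable_const (1:ℝ)).indicator (hm u c)
    · rw [he]; exact integral_indicator_one (hm u c)
  -- per-user expectations
  set E : Fin n → ℝ := fun u => (μ {ω | X u ω = 1}).toReal + (μ {ω | X u ω = -1}).toReal with hE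
  have hEin : ∀ u ∈ Uk, E u = (1 / (ℓ:ℝ)) * a + (1 - 1/(ℓ:ℝ)) * b := by
    intro u hu
    have hv1 := (hv u hu).1
    have hv2 := (hv u hu).2
    have hℓinv : 0 ≤ 1/(ℓ:ℝ) := by positivity
    have hℓinv1 : 1/(ℓ:ℝ) ≤ 1 := by
      rw [div_le_one hℓ0]; exact hℓ1
    have hpos1 : 0 ≤ (1 / (ℓ : ℝ)) * (a * (1 + (2*p - 1) * v u) / 2)
          + (1 - 1 / (ℓ : ℝ)) * (b / 2) := by
      have h1 : (0:ℝ) ≤ 1 + (2*p - 1) * v u := by nlinarith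
      have ha0 : (0:ℝ) < a := lt_trans h0b hba
      have : 0 ≤ (1 / (ℓ : ℝ)) * (a * (1 + (2*p - 1) * v u) / 2) := by positivity
      nlinarith
    have hpos2 : 0 ≤ (1 / (ℓ : ℝ)) * (a * (1 - (2*p - 1) * v u) / 2)
          + (1 - 1 / (ℓ : ℝ)) * (b / 2) := by
      have h1 : (0:ℝ) ≤ 1 - (2*p - 1) * v u := by nlinarith
      have ha0 : (0:ℝ) < a := lt_trans h0b hba
      have : 0 ≤ (1 / (ℓ : ℝ)) * (a * (1 - (2*p - 1) * v u) / 2) := by positivity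
      nlinarith
    rw [hE]
    simp only [h1in u hu, h2in u hu, ENNReal.toReal_ofReal hpos1, ENNReal.toReal_ofReal hpos2]
    ring
  have hEout : ∀ u ∉ Uk, E u = b := by
    intro u hu
    have hb2 : (0:ℝ) ≤ b/2 := by positivity
    rw [hE]
    simp only [h1out u hu, h2out u hu, ENNReal.toReal_ofReal hb2]
    ring
  -- the sum S
  set S : Ω → ℝ := fun ω => (∑ u, (if X u ω = 1 then (1:ℝ) else 0))
      + (∑ u, (if X u ω = -1 then (1:ℝ) else 0)) with hS
  have hSint : Integrable S μ := by
    apply Integrable.add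
    · exact integrable_finset_sum _ (fun u _ => (key u 1).1)
    · exact integrable_finset_sum _ (fun u _ => (key u (-1)).1)
  have hSval : ∫ ω, S ω ∂μ = ∑ u, E u := by
    rw [hS]
    rw [integral_add (integrable_finset_sum _ (fun u _ => (key u 1).1))
        (integrable_finset_sum _ (fun u _ => (key u (-1)).1)),
      integral_finset_sum _ (fun u _ => (key u 1).1),
      integral_finset_sum _ (fun u _ => (key u (-1)).1),
      ← Finset.sum_add_distrib]
    exact Finset.sum_congr rfl fun u _ => by rw [hE, (key u 1).2, (key u (-1)).2]
  -- compute the sum of E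
  have hsumE : ∑ u, E u = (Uk.card : ℝ) * ((1 / (ℓ:ℝ)) * a + (1 - 1/(ℓ:ℝ)) * b)
      + ((Ukᶜ.card : ℝ)) * b := by
    rw [← Finset.sum_add_sum_compl Uk E]
    congr 1
    · rw [Finset.sum_congr rfl (fun u hu => hEin u hu), Finset.sum_const, nsmul_eq_mul]
    · rw [Finset.sum_congr rfl (fun u hu => hEout u (by simpa using hu)),
        Finset.sum_const, nsmul_eq_mul]
  have hcard : (Uk.card : ℝ) + (Ukᶜ.card : ℝ) = (n : ℝ) := by
    have := Finset.card_add_card_compl Uk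
    have h2 : Uk.card + Ukᶜ.card = n := by simpa using this
    exact_mod_cast h2
  -- rewrite the integrand as affine function of S
  have hrw : (fun ω => (ℓ : ℝ) * ((S ω / (n : ℝ) - b) / (a - b)))
      = fun ω => ((ℓ:ℝ)/((a-b)*(n:ℝ))) * S ω + (-((ℓ:ℝ)*b/(a-b))) := by
    funext ω
    field_simp
    ring
  calc (∫ ω, (ℓ : ℝ) *
        ((((∑ u, (if X u ω = 1 then (1 : ℝ) else 0)) +
           (∑ u, (if X u ω = -1 then (1 : ℝ) else 0))) / (n : ℝ) - b)
          / (a - b)) ∂μ)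
      = ∫ ω, (((ℓ:ℝ)/((a-b)*(n:ℝ))) * S ω + (-((ℓ:ℝ)*b/(a-b)))) ∂μ := by
        rw [← hrw]
    _ = ((ℓ:ℝ)/((a-b)*(n:ℝ))) * (∑ u, E u) + (-((ℓ:ℝ)*b/(a-b))) := by
        rw [integral_add (hSint.const_mul _) (integrable_const _),
          integral_const_mul, hSval, integral_const]
        simp
    _ = (Uk.card : ℝ) / (n : ℝ) := by
        rw [hsumE]
        have hUc : (Ukᶜ.card : ℝ) = (n : ℝ) - (Uk.card : ℝ) := by linarith
        rw [hUc]
        field_simp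
        ring
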